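/- Let G be a group with a symmetric generating set S, let N be a nontrivial normal subgroup of finite index in G, and let α = min{l_S(y) : y ∈ N, y ≠ e}. Let r ≥ 1 and m ≥ 1 be integers, let a : G → ℂ be finitely supported with supp a ⊆ {g : l_S(g) ≤ r}, and assume 4(3·r·m + r) < α. Then for every ξ : G/N → ℂ with |supp ξ| ≤ m there exists a finitely supported nonzero ψ : G → ℂ such that ‖λ_{G/N}(a)ξ‖ · ‖ψ‖ ≤ ‖λ_G(a)ψ‖ · ‖ξ‖, where (λ_G(a)ψ)(h) = ∑_{g∈G} a(g)·ψ(g⁻¹h), (λ_{G/N}(a)ξ)(x) = ∑_{g∈G} a(g)·ξ(π(g)⁻¹·x) for the quotient map π : G → G/N, and all norms are l² norms (square root of the sum of squared moduli). -/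

import Mathlib

/-- The word length of `g` with respect to a generating set `S`: the least `n`
such that `g` is a product of `n` elements of `S`. -/
noncomputable def wordLength {G : Type*} [Group G] (S : Set G) (g : G) : ℕ :=
  sInf {n : ℕ | ∃ l : List G, l.length = n ∧ (∀ x ∈ l, x ∈ S) ∧ l.prod = g}

-- Auxiliary infrastructure
section WL
variable {G : Type*} [Group G] {S : Set G} (hsym : S⁻¹ = S) (hgen : Subgroup.closure S = ⊤)

include hsym hgen in
lemma wl_exists_list (g : G) :
    ∃ l : List G, l.length = wordLength S g ∧ (∀ x ∈ l, x ∈ S) ∧ l.prod = g := by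
  have hne : {n : ℕ | ∃ l : List G, l.length = n ∧ (∀ x ∈ l, x ∈ S) ∧ l.prod = g}.Nonempty := by
    have hg : g ∈ Subgroup.closure S := hgen ▸ Subgroup.mem_top g
    have hg' : g ∈ Submonoid.closure (S ∪ S⁻¹) := by
      rw [← Subgroup.closure_toSubmonoid]; exact hg
    obtain ⟨l, hl1, hl2⟩ := Submonoid.exists_list_of_mem_closure hg'
    refine ⟨l.length, l, rfl, fun x hx => ?_, hl2⟩
    rcases hl1 x hx with h | h
    · exact h
    · rwa [← hsym]
  exact Nat.sInf_mem hne

lemma wl_le_list {g : G} {l : List G} (hl : ∀ x ∈ l, x ∈ S) (hp : l.prod = g) :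
    wordLength S g ≤ l.length :=
  Nat.sInf_le ⟨l, rfl, hl, hp⟩

lemma wl_one : wordLength S (1 : G) = 0 :=
  Nat.le_zero.mp (wl_le_list (l := []) (by simp) (by simp))

include hsym hgen in
lemma wl_mul (g h : G) :
    wordLength S (g * h) ≤ wordLength S g + wordLength S h := by
  obtain ⟨l1, h1, h2, h3⟩ := wl_exists_list hsym hgen g
  obtain ⟨l2, k1, k2, k3⟩ := wl_exists_list hsym hgen h
  have := wl_le_list (g := g * h) (l := l1 ++ l2) (by
    intro x hx; rcases List.mem_append.mp hx with h | h; exacts [h2 x h, k2 x h])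
    (by rw [List.prod_append, h3, k3])
  simpa [h1, k1] using this

include hsym hgen in
lemma wl_inv (g : G) : wordLength S g⁻¹ ≤ wordLength S g := by
  obtain ⟨l, h1, h2, h3⟩ := wl_exists_list hsym hgen g
  have := wl_le_list (g := g⁻¹) (l := (l.map fun x => x⁻¹).reverse) (by
    intro x hx
    simp only [List.mem_reverse, List.mem_map] at hx
    obtain ⟨y, hy, rfl⟩ := hx
    have : y⁻¹ ∈ S⁻¹ := Set.inv_mem_inv.mpr (h2 y hy)
    rwa [hsym] at this)
    (by rw [← List.prod_inv_reverse, h3])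
  simpa [h1] using this

end WL

noncomputable def qlen {G : Type*} [Group G] (S : Set G) (N : Subgroup G) [N.Normal]
    (x : G ⧸ N) : ℕ :=
  sInf {n : ℕ | ∃ g : G, QuotientGroup.mk' N g = x ∧ wordLength S g = n}

section QL
variable {G : Type*} [Group G] {S : Set G} (hsym : S⁻¹ = S) (hgen : Subgroup.closure S = ⊤)
  (N : Subgroup G) [N.Normal]

lemma qlen_exists (x : G ⧸ N) :
    ∃ g : G, QuotientGroup.mk' N g = x ∧ wordLength S g = qlen S N x := by
  have hne : {n : ℕ | ∃ g : G, QuotientGroup.mk' N g = x ∧ wordLength S g = n}.Nonempty := by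
    obtain ⟨g, rfl⟩ := QuotientGroup.mk'_surjective N x
    exact ⟨wordLength S g, g, rfl, rfl⟩
  exact Nat.sInf_mem hne

lemma qlen_le {g : G} {x : G ⧸ N} (h : QuotientGroup.mk' N g = x) :
    qlen S N x ≤ wordLength S g :=
  Nat.sInf_le ⟨g, h, rfl⟩

lemma qlen_one : qlen S N (1 : G ⧸ N) = 0 :=
  Nat.le_zero.mp (le_of_le_of_eq (qlen_le N (map_one _)) (wl_one))

include hsym hgen in
lemma qlen_mul (x y : G ⧸ N) : qlen S N (x * y) ≤ qlen S N x + qlen S N y := by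
  obtain ⟨g, hg, hg2⟩ := qlen_exists (S := S) N x
  obtain ⟨k, hk, hk2⟩ := qlen_exists (S := S) N y
  have := qlen_le (S := S) N (g := g * k) (x := x * y) (by rw [map_mul, hg, hk])
  calc qlen S N (x * y) ≤ wordLength S (g * k) := this
    _ ≤ wordLength S g + wordLength S k := wl_mul hsym hgen g k
    _ = qlen S N x + qlen S N y := by rw [hg2, hk2]

end QL

noncomputable def snF {X : Type*} (f : X → ℂ) : ℝ := ∑ᶠ x, ‖f x‖ ^ 2

noncomputable def convG {G : Type*} [Group G] (a ψ : G → ℂ) : G → ℂ :=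
  fun h => ∑ᶠ g, a g * ψ (g⁻¹ * h)

noncomputable def convQ {G : Type*} [Group G] (N : Subgroup G) [N.Normal]
    (a : G → ℂ) (ξ : G ⧸ N → ℂ) : G ⧸ N → ℂ :=
  fun x => ∑ᶠ g : G, a g * ξ ((QuotientGroup.mk' N g)⁻¹ * x)

lemma snF_nonneg {X : Type*} (f : X → ℂ) : 0 ≤ snF f :=
  finsum_nonneg fun x => by positivity

lemma snF_eq_sum {X : Type*} (f : X → ℂ) {s : Finset X} (h : Function.support f ⊆ ↑s) :
    snF f = ∑ x ∈ s, ‖f x‖ ^ 2 := by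
  refine finsum_eq_finset_sum_of_support_subset _ ?_
  intro x hx
  have : f x ≠ 0 := by
    intro h0
    simp [Function.mem_support, h0] at hx
  exact h this

lemma snF_fintype {X : Type*} [Fintype X] (f : X → ℂ) :
    snF f = ∑ x, ‖f x‖ ^ 2 := finsum_eq_sum_of_fintype _

lemma convG_eq {G : Type*} [Group G] {a : G → ℂ} (ha : (Function.support a).Finite)
    (ψ : G → ℂ) (h : G) :
    convG a ψ h = ∑ g ∈ ha.toFinset, a g * ψ (g⁻¹ * h) := by
  refine finsum_eq_finset_sum_of_support_subset _ ?_
  intro g hg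
  have : a g ≠ 0 := fun h0 => by simp [Function.mem_support, h0] at hg
  simpa using this

lemma convQ_eq {G : Type*} [Group G] (N : Subgroup G) [N.Normal]
    {a : G → ℂ} (ha : (Function.support a).Finite) (ξ : G ⧸ N → ℂ) (x : G ⧸ N) :
    convQ N a ξ x = ∑ g ∈ ha.toFinset, a g * ξ ((QuotientGroup.mk' N g)⁻¹ * x) := by
  refine finsum_eq_finset_sum_of_support_subset _ ?_
  intro g hg
  have : a g ≠ 0 := fun h0 => by simp [Function.mem_support, h0] at hg
  simpa using this
section LemL
variable {G : Type*} [Group G]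

lemma lemL {S : Set G} (hsym : S⁻¹ = S) (hgen : Subgroup.closure S = ⊤)
    (N : Subgroup G) [N.Normal] [N.FiniteIndex]
    (α r m : ℕ) (hr : 1 ≤ r) (hm : 1 ≤ m)
    (htriv : ∀ g : G, g ∈ N → wordLength S g < α → g = 1)
    (a : G → ℂ) (ha : (Function.support a).Finite)
    (har : Function.support a ⊆ {g : G | wordLength S g ≤ r})
    (hcond : 4 * r * m + 2 * r < α)
    (ξ : G ⧸ N → ℂ) (hξ : ξ ≠ 0)
    (hql : ∀ x : G ⧸ N, ξ x ≠ 0 → qlen S N x ≤ 2 * r * (m - 1)) :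
    ∃ ψ : G → ℂ, ψ ≠ 0 ∧ (Function.support ψ).Finite ∧
      snF ψ = snF ξ ∧ snF (convG a ψ) = snF (convQ N a ξ) := by
  classical
  obtain ⟨m', rfl⟩ : ∃ m', m = m' + 1 := ⟨m - 1, by omega⟩
  set π : G →* G ⧸ N := QuotientGroup.mk' N with hπdef
  choose σ hσ1 hσ2 using qlen_exists (S := S) N
  set ψ : G → ℂ := fun h => if σ (π h) = h then ξ (π h) else 0 with hψdef
  have hσinj : Function.Injective σ := fun x y hxy => by rw [← hσ1 x, ← hσ1 y, hxy]
  have hψσ : ∀ x, ψ (σ x) = ξ x := fun x => by simp only [hψdef]; rw [hπdef, hσ1, if_pos rfl]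
  have hψne : ∀ h, ψ h ≠ 0 → σ (π h) = h ∧ ξ (π h) ≠ 0 := by
    intro h hh
    by_cases hc : σ (π h) = h
    · refine ⟨hc, ?_⟩
      simp only [hψdef, hc, if_true] at hh
      exact hh
    · simp [hψdef, hc] at hh
  have hψval : ∀ h, ψ h = 0 ∨ ψ h = ξ (π h) := by
    intro h
    by_cases hc : σ (π h) = h
    · right; simp [hψdef, hc]
    · left; simp [hψdef, hc]
  have hwlσ : ∀ x : G ⧸ N, ξ x ≠ 0 → wordLength S (σ x) ≤ 2 * r * m' := by
    intro x hx
    rw [hσ2]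
    simpa using hql x hx
  -- key rigidity
  have hshort : ∀ (u u' : G) (x x' : G ⧸ N), wordLength S u ≤ 2 * r →
      wordLength S u' ≤ 2 * r → ξ x ≠ 0 → ξ x' ≠ 0 →
      π (u * σ x) = π (u' * σ x') → u * σ x = u' * σ x' := by
    intro u u' x x' hu hu' hx hx' hπeq
    set n := (u * σ x)⁻¹ * (u' * σ x') with hn
    have hnN : n ∈ N := by
      have : π n = 1 := by rw [hn, map_mul, map_inv, hπeq, inv_mul_cancel]
      rw [← QuotientGroup.ker_mk' N]
      exact MonoidHom.mem_ker.mpr this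
    have hwl : wordLength S n ≤ 2 * r * m' + (2 * r + (2 * r + 2 * r * m')) := by
      have h1 : wordLength S n ≤ wordLength S (u * σ x)⁻¹ + wordLength S (u' * σ x') :=
        wl_mul hsym hgen _ _
      have h2 : wordLength S (u * σ x)⁻¹ ≤ wordLength S (σ x) + wordLength S u := by
        calc wordLength S (u * σ x)⁻¹ = wordLength S ((σ x)⁻¹ * u⁻¹) := by rw [mul_inv_rev]
          _ ≤ wordLength S (σ x)⁻¹ + wordLength S u⁻¹ := wl_mul hsym hgen _ _
          _ ≤ wordLength S (σ x) + wordLength S u :=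
              Nat.add_le_add (wl_inv hsym hgen _) (wl_inv hsym hgen _)
      have h3 : wordLength S (u' * σ x') ≤ wordLength S u' + wordLength S (σ x') :=
        wl_mul hsym hgen _ _
      have h4 := hwlσ x hx
      have h5 := hwlσ x' hx'
      omega
    have hlt : wordLength S n < α := by
      refine lt_of_le_of_lt hwl ?_
      have : 2 * r * m' + (2 * r + (2 * r + 2 * r * m')) = 4 * r * m' + 4 * r := by ring
      rw [this]
      have hc2 : 4 * r * (m' + 1) + 2 * r = 4 * r * m' + 6 * r := by ring
      rw [hc2] at hcond
      omega
    have h1 := htriv n hnN hlt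
    rw [hn] at h1
    exact (inv_mul_eq_one.mp h1)
  -- finsets
  haveI : Fintype (G ⧸ N) := Fintype.ofFinite _
  set T : Finset (G ⧸ N) := Finset.univ.filter (fun x => ξ x ≠ 0) with hTdef
  have hTmem : ∀ x : G ⧸ N, x ∈ T ↔ ξ x ≠ 0 := fun x => by simp [hTdef]
  set Hf : Finset G := (ha.toFinset ×ˢ T).image (fun p => p.1 * σ p.2) with hHdef
  have hHi : ∀ (g : G) (x : G ⧸ N), a g ≠ 0 → ξ x ≠ 0 → g * σ x ∈ Hf := by
    intro g x hg hx
    refine Finset.mem_image.mpr ⟨(g, x), ?_, rfl⟩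
    exact Finset.mem_product.mpr ⟨(Set.Finite.mem_toFinset ha).mpr hg, (hTmem x).mpr hx⟩
  have hHd : ∀ h ∈ Hf, ∃ g x, a g ≠ 0 ∧ ξ x ≠ 0 ∧ h = g * σ x := by
    intro h hh
    obtain ⟨⟨g, x⟩, hgx, rfl⟩ := Finset.mem_image.mp hh
    obtain ⟨hg, hx⟩ := Finset.mem_product.mp hgx
    exact ⟨g, x, (Set.Finite.mem_toFinset ha).mp hg, (hTmem x).mp hx, rfl⟩
  -- support of psi
  have hψsupp : Function.support ψ ⊆ ↑(T.image σ) := by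
    intro h hh
    obtain ⟨hc, hxne⟩ := hψne h (Function.mem_support.mp hh)
    exact Finset.mem_coe.mpr (Finset.mem_image.mpr ⟨π h, (hTmem _).mpr hxne, hc⟩)
  have hψfin : (Function.support ψ).Finite :=
    Set.Finite.subset (T.image σ).finite_toSet hψsupp
  have hψne0 : ψ ≠ 0 := by
    obtain ⟨x, hx⟩ := Function.ne_iff.mp hξ
    intro h0
    apply hx
    have h1 := congrFun h0 (σ x)
    rwa [hψσ x] at h1
  -- norms of psi and xi agree
  have hsn1 : snF ψ = snF ξ := by
    rw [snF_eq_sum ψ hψsupp,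
      Finset.sum_image (fun x _ y _ hxy => hσinj hxy),
      snF_eq_sum ξ (s := T) (fun x hx => Finset.mem_coe.mpr ((hTmem x).mpr hx))]
    exact Finset.sum_congr rfl fun x _ => by rw [hψσ]
  -- rigidity of representatives
  have hrep : ∀ (g : G), a g ≠ 0 → ∀ h ∈ Hf, ξ (π (g⁻¹ * h)) ≠ 0 →
      g⁻¹ * h = σ (π (g⁻¹ * h)) := by
    intro g hg h hh hy
    obtain ⟨g', x', hg', hx', rfl⟩ := hHd h hh
    have hwl1 : wordLength S (1 : G) ≤ 2 * r := by rw [wl_one]; omega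
    have hwl2 : wordLength S (g⁻¹ * g') ≤ 2 * r := by
      have := wl_mul hsym hgen g⁻¹ g'
      have h2 := wl_inv hsym hgen g
      have h3 : wordLength S g ≤ r := har hg
      have h4 : wordLength S g' ≤ r := har hg'
      omega
    have hπeq : π ((1 : G) * σ (π (g⁻¹ * (g' * σ x')))) = π ((g⁻¹ * g') * σ x') := by
      rw [one_mul, hσ1, mul_assoc]
    have := hshort 1 (g⁻¹ * g') (π (g⁻¹ * (g' * σ x'))) x' hwl1 hwl2 hy hx' hπeq
    rw [one_mul] at this
    rw [this, mul_assoc]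
  -- pointwise equality of convolutions on Hf
  have hconv_pt : ∀ h ∈ Hf, convG a ψ h = convQ N a ξ (π h) := by
    intro h hh
    rw [convG_eq ha, convQ_eq N ha]
    refine Finset.sum_congr rfl ?_
    intro g hg
    have hgne : a g ≠ 0 := (Set.Finite.mem_toFinset ha).mp hg
    have hq : (QuotientGroup.mk' N g)⁻¹ * π h = π (g⁻¹ * h) := by
      rw [hπdef, map_mul, map_inv]
    rw [hq]
    by_cases hy : ξ (π (g⁻¹ * h)) = 0
    · rcases hψval (g⁻¹ * h) with h0 | hval
      · rw [h0, hy]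
      · rw [hval, hy]
    · have h2 := hrep g hgne h hh hy
      conv_lhs => rw [h2]
      rw [hψσ]
  -- injectivity of pi on Hf
  have hinj : ∀ h ∈ Hf, ∀ h' ∈ Hf, π h = π h' → h = h' := by
    intro h hh h' hh' hπeq
    obtain ⟨g, x, hg, hx, rfl⟩ := hHd h hh
    obtain ⟨g', x', hg', hx', rfl⟩ := hHd h' hh'
    have h3' : wordLength S g ≤ r := har hg
    have h4' : wordLength S g' ≤ r := har hg'
    have h3 : wordLength S g ≤ 2 * r := by omega
    have h4 : wordLength S g' ≤ 2 * r := by omega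
    exact hshort g g' x x' h3 h4 hx hx' hπeq
  -- support of convolutions
  have hconvsupp : Function.support (convG a ψ) ⊆ ↑Hf := by
    intro h hh
    rw [Function.mem_support, convG_eq ha] at hh
    obtain ⟨g, hg, hne⟩ := Finset.exists_ne_zero_of_sum_ne_zero hh
    have hψn : ψ (g⁻¹ * h) ≠ 0 := fun h0 => hne (by rw [h0, mul_zero])
    obtain ⟨hc, hxne⟩ := hψne _ hψn
    have heq : h = g * σ (π (g⁻¹ * h)) := by rw [hc]; group
    rw [heq]
    exact Finset.mem_coe.mpr (hHi _ _ ((Set.Finite.mem_toFinset ha).mp hg) hxne)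
  have hconvQsupp : Function.support (convQ N a ξ) ⊆ ↑(Hf.image π) := by
    intro x hx
    rw [Function.mem_support, convQ_eq N ha] at hx
    obtain ⟨g, hg, hne⟩ := Finset.exists_ne_zero_of_sum_ne_zero hx
    have hgne : a g ≠ 0 := (Set.Finite.mem_toFinset ha).mp hg
    have hξn : ξ ((QuotientGroup.mk' N g)⁻¹ * x) ≠ 0 := fun h0 => hne (by rw [h0, mul_zero])
    have hξn' : ξ ((π g)⁻¹ * x) ≠ 0 := by rw [hπdef]; exact hξn
    have heq : x = π (g * σ ((π g)⁻¹ * x)) := by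
      rw [map_mul, hσ1]; group
    rw [heq]
    exact Finset.mem_coe.mpr (Finset.mem_image_of_mem π (hHi _ _ hgne hξn'))
  -- norms of convolutions agree
  have hsn2 : snF (convG a ψ) = snF (convQ N a ξ) := by
    rw [snF_eq_sum _ hconvsupp, snF_eq_sum _ hconvQsupp, Finset.sum_image hinj]
    exact Finset.sum_congr rfl fun h hh => by rw [hconv_pt h hh]
  exact ⟨ψ, hψne0, hψfin, hsn1, hsn2⟩


end LemL
lemma snF_pos {X : Type*} [Fintype X] {f : X → ℂ} (x : X) (hx : f x ≠ 0) : 0 < snF f := by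
  rw [snF_fintype]
  refine Finset.sum_pos' (fun i _ => by positivity) ⟨x, Finset.mem_univ x, ?_⟩
  exact pow_pos (norm_pos_iff.mpr hx) 2

section Outer
variable {G : Type*} [Group G]

lemma mainInd {S : Set G} (hsym : S⁻¹ = S) (hgen : Subgroup.closure S = ⊤)
    (N : Subgroup G) [N.Normal] [N.FiniteIndex]
    (α r m : ℕ) (hr : 1 ≤ r) (hm : 1 ≤ m)
    (htriv : ∀ g : G, g ∈ N → wordLength S g < α → g = 1)
    (a : G → ℂ) (ha : (Function.support a).Finite)
    (har : Function.support a ⊆ {g : G | wordLength S g ≤ r})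
    (hcond : 4 * (3 * r * m + r) < α) :
    ∀ (k : ℕ) (ξ : G ⧸ N → ℂ), (Function.support ξ).ncard ≤ m →
      (Function.support ξ).ncard ≤ k →
      ∃ ψ : G → ℂ, ψ ≠ 0 ∧ (Function.support ψ).Finite ∧
        snF (convQ N a ξ) * snF ψ ≤ snF (convG a ψ) * snF ξ := by
  classical
  haveI : Fintype (G ⧸ N) := Fintype.ofFinite _
  -- the trivial psi, used when the LHS vanishes
  have htrivψ : ∀ ξ : G ⧸ N → ℂ, snF (convQ N a ξ) = 0 →
      ∃ ψ : G → ℂ, ψ ≠ 0 ∧ (Function.support ψ).Finite ∧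
        snF (convQ N a ξ) * snF ψ ≤ snF (convG a ψ) * snF ξ := by
    intro ξ hQ
    refine ⟨fun g => if g = 1 then 1 else 0, ?_, ?_, ?_⟩
    · intro h0
      have := congrFun h0 1
      simp at this
    · refine Set.Finite.subset (Set.finite_singleton 1) ?_
      intro g hg
      rw [Function.mem_support] at hg
      by_contra hne
      simp only [Set.mem_singleton_iff] at hne
      simp [hne] at hg
    · rw [hQ, zero_mul]
      exact mul_nonneg (snF_nonneg _) (snF_nonneg _)
  intro k
  induction k with
  | zero =>
    intro ξ hm' hk
    by_cases hQ : snF (convQ N a ξ) = 0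
    · exact htrivψ ξ hQ
    exfalso
    apply hQ
    have hfin : (Function.support ξ).Finite := Set.toFinite _
    have h0 : Function.support ξ = ∅ := by
      rw [← Set.ncard_eq_zero hfin]; omega
    have hξ0 : ξ = 0 := Function.support_eq_empty_iff.mp h0
    have : convQ N a ξ = 0 := by
      funext x
      rw [hξ0]
      simp [convQ]
    rw [this]
    simp [snF]
  | succ k ih =>
    intro ξ hm' hk
    by_cases hQ : snF (convQ N a ξ) = 0
    · exact htrivψ ξ hQ
    have hξ : ξ ≠ 0 := by
      intro hξ0
      apply hQ
      have : convQ N a ξ = 0 := by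
        funext x; rw [hξ0]; simp [convQ]
      rw [this]; simp [snF]
    obtain ⟨x₀, hx₀'⟩ := Function.ne_iff.mp hξ
    have hx₀ : ξ x₀ ≠ 0 := by simpa using hx₀'
    set T : Finset (G ⧸ N) := Finset.univ.filter (fun x => ξ x ≠ 0) with hTdef
    have hTmem : ∀ x : G ⧸ N, x ∈ T ↔ ξ x ≠ 0 := fun x => by simp [hTdef]
    have hTsupp : Function.support ξ = ↑T := by
      ext x; simp [hTdef, Function.mem_support]
    have hTcard : T.card ≤ m := by
      have := hm'
      rwa [hTsupp, Set.ncard_coe_finset] at this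
    set P : ℕ → Finset (G ⧸ N) :=
      fun j => T.filter (fun y => qlen S N (y * x₀⁻¹) ≤ 2 * r * j) with hPdef
    have hPmono : ∀ i j, i ≤ j → P i ⊆ P j := by
      intro i j hij y hy
      rw [hPdef, Finset.mem_filter] at hy ⊢
      refine ⟨hy.1, le_trans hy.2 ?_⟩
      exact Nat.mul_le_mul_left _ hij
    have hx₀P : ∀ j, x₀ ∈ P j := by
      intro j
      rw [hPdef, Finset.mem_filter]
      refine ⟨(hTmem x₀).mpr hx₀, ?_⟩
      rw [mul_inv_cancel, qlen_one]
      exact Nat.zero_le _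
    obtain ⟨j, hjm, hPj⟩ : ∃ j, j + 1 ≤ m ∧ P j = P (j + 1) := by
      by_contra hcon
      push_neg at hcon
      have hgrow : ∀ j, j ≤ m → j + 1 ≤ (P j).card := by
        intro j
        induction j with
        | zero =>
          intro _
          exact Finset.card_pos.mpr ⟨x₀, hx₀P 0⟩
        | succ i ihi =>
          intro hi
          have h1 : i + 1 ≤ (P i).card := ihi (by omega)
          have h2 : P i ⊂ P (i + 1) :=
            (Finset.ssubset_iff_subset_ne).mpr ⟨hPmono i (i+1) (by omega), hcon i (by omega)⟩
          have := Finset.card_lt_card h2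
          omega
      have h1 := hgrow m le_rfl
      have h2 : (P m).card ≤ T.card := Finset.card_le_card (Finset.filter_subset _ _)
      omega
    have hx₀C : x₀ ∈ P j := hx₀P j
    have hCq : ∀ y ∈ P j, qlen S N (y * x₀⁻¹) ≤ 2 * r * (m - 1) := by
      intro y hy
      simp only [hPdef, Finset.mem_filter] at hy
      refine le_trans hy.2 ?_
      exact Nat.mul_le_mul_left _ (by omega)
    have hsep : ∀ y ∈ T, y ∉ P j → ∀ x ∈ P j, ¬ (qlen S N (y * x⁻¹) ≤ 2 * r) := by
      intro y hyT hyC x hxC hle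
      apply hyC
      rw [hPj]
      simp only [hPdef, Finset.mem_filter]
      refine ⟨hyT, ?_⟩
      have h1 : qlen S N (y * x₀⁻¹) ≤ qlen S N (y * x⁻¹) + qlen S N (x * x₀⁻¹) := by
        have : y * x₀⁻¹ = (y * x⁻¹) * (x * x₀⁻¹) := by group
        rw [this]
        exact qlen_mul hsym hgen N _ _
      have h2 : qlen S N (x * x₀⁻¹) ≤ 2 * r * j := by
        simp only [hPdef, Finset.mem_filter] at hxC
        exact hxC.2
      have h3 : 2 * r + 2 * r * j = 2 * r * (j + 1) := by ring
      omega
    -- split xi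
    set ξC : G ⧸ N → ℂ := fun x => if x ∈ P j then ξ x else 0 with hξCdef
    set ξR : G ⧸ N → ℂ := fun x => if x ∈ P j then 0 else ξ x with hξRdef
    have hadd : ∀ x, ξ x = ξC x + ξR x := by
      intro x
      by_cases hc : x ∈ P j <;> simp [hξCdef, hξRdef, hc]
    have hconvadd : ∀ x, convQ N a ξ x = convQ N a ξC x + convQ N a ξR x := by
      intro x
      rw [convQ_eq N ha, convQ_eq N ha, convQ_eq N ha, ← Finset.sum_add_distrib]
      exact Finset.sum_congr rfl fun g _ => by rw [← mul_add, ← hadd]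
    have hdisj : ∀ x, convQ N a ξC x = 0 ∨ convQ N a ξR x = 0 := by
      intro x
      by_contra hcon
      push_neg at hcon
      obtain ⟨h1, h2⟩ := hcon
      rw [convQ_eq N ha] at h1 h2
      obtain ⟨g, hg, hne⟩ := Finset.exists_ne_zero_of_sum_ne_zero h1
      obtain ⟨g', hg', hne'⟩ := Finset.exists_ne_zero_of_sum_ne_zero h2
      have hgw : wordLength S g ≤ r := har ((Set.Finite.mem_toFinset ha).mp hg)
      have hgw' : wordLength S g' ≤ r := har ((Set.Finite.mem_toFinset ha).mp hg')
      have hc : ξC ((QuotientGroup.mk' N g)⁻¹ * x) ≠ 0 := fun h0 => hne (by rw [h0, mul_zero])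
      have hc' : ξR ((QuotientGroup.mk' N g')⁻¹ * x) ≠ 0 := fun h0 => hne' (by rw [h0, mul_zero])
      set c := (QuotientGroup.mk' N g)⁻¹ * x with hcdef
      set y := (QuotientGroup.mk' N g')⁻¹ * x with hydef
      have hcC : c ∈ P j := by
        by_contra h
        simp [hξCdef, h] at hc
      have hyC : y ∉ P j := by
        by_contra h
        simp [hξRdef, h] at hc'
      have hyT : y ∈ T := by
        rw [hTmem]
        intro h0
        simp [hξRdef, h0] at hc'
      refine hsep y hyT hyC c hcC ?_
      have hyc : y * c⁻¹ = QuotientGroup.mk' N (g'⁻¹ * g) := by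
        rw [map_mul, map_inv, hydef, hcdef]
        group
      have := qlen_le (S := S) N hyc.symm
      have hwl : wordLength S (g'⁻¹ * g) ≤ 2 * r := by
        have h1 := wl_mul hsym hgen g'⁻¹ g
        have h2 := wl_inv hsym hgen g'
        omega
      omega
    have hsplitQ : snF (convQ N a ξ) = snF (convQ N a ξC) + snF (convQ N a ξR) := by
      rw [snF_fintype, snF_fintype, snF_fintype, ← Finset.sum_add_distrib]
      refine Finset.sum_congr rfl fun x _ => ?_
      rcases hdisj x with h0 | h0 <;> rw [hconvadd x, h0] <;> simp
    have hsplitE : snF ξ = snF ξC + snF ξR := by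
      rw [snF_fintype, snF_fintype, snF_fintype, ← Finset.sum_add_distrib]
      refine Finset.sum_congr rfl fun x _ => ?_
      by_cases hc : x ∈ P j <;> simp [hξCdef, hξRdef, hc]
    have hEC : 0 < snF ξC := by
      refine snF_pos x₀ ?_
      simp [hξCdef, hx₀C, hx₀]
    by_cases hdich : snF (convQ N a ξ) * snF ξC ≤ snF (convQ N a ξC) * snF ξ
    · -- use the cluster C, after translating by x₀
      set ξ' : G ⧸ N → ℂ := fun z => ξC (z * x₀) with hξ'def
      have hξ'ne : ξ' ≠ 0 := by
        intro h0
        have := congrFun h0 (x₀ * x₀⁻¹)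
        simp only [hξ'def] at this
        rw [inv_mul_cancel_right] at this
        simp [hξCdef, hx₀C] at this
        exact hx₀ this
      have hql' : ∀ z : G ⧸ N, ξ' z ≠ 0 → qlen S N z ≤ 2 * r * (m - 1) := by
        intro z hz
        simp only [hξ'def] at hz
        have hzC : z * x₀ ∈ P j := by
          by_contra h
          simp [hξCdef, h] at hz
        have := hCq (z * x₀) hzC
        rwa [mul_inv_cancel_right] at this
      have hcond' : 4 * r * m + 2 * r < α := by nlinarith
      obtain ⟨ψ, hψne, hψfin, hs1, hs2⟩ :=
        lemL hsym hgen N α r m hr hm htriv a ha har hcond' ξ' hξ'ne hql'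
      have htr1 : snF ξ' = snF ξC := by
        rw [snF_fintype, snF_fintype]
        exact Fintype.sum_equiv (Equiv.mulRight x₀) _ _ fun z => rfl
      have hconv' : ∀ z, convQ N a ξ' z = convQ N a ξC (z * x₀) := by
        intro z
        rw [convQ_eq N ha, convQ_eq N ha]
        refine Finset.sum_congr rfl fun g _ => ?_
        simp only [hξ'def]
        rw [mul_assoc]
      have htr2 : snF (convQ N a ξ') = snF (convQ N a ξC) := by
        rw [snF_fintype, snF_fintype]
        refine Fintype.sum_equiv (Equiv.mulRight x₀) _ _ fun z => ?_
        rw [hconv' z]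
        rfl
      rw [htr1] at hs1
      rw [htr2] at hs2
      refine ⟨ψ, hψne, hψfin, ?_⟩
      have key : (snF (convQ N a ξ) * snF ψ) * snF ξC ≤
          (snF (convG a ψ) * snF ξ) * snF ξC := by
        calc (snF (convQ N a ξ) * snF ψ) * snF ξC
            = (snF (convQ N a ξ) * snF ξC) * snF ψ := by ring
          _ ≤ (snF (convQ N a ξC) * snF ξ) * snF ψ :=
              mul_le_mul_of_nonneg_right hdich (snF_nonneg _)
          _ = (snF (convQ N a ξC) * snF ψ) * snF ξ := by ring
          _ = (snF (convG a ψ) * snF ξC) * snF ξ := by rw [← hs2, ← hs1]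
          _ = (snF (convG a ψ) * snF ξ) * snF ξC := by ring
      exact le_of_mul_le_mul_right key hEC
    · -- recurse on the rest
      push_neg at hdich
      have hξR : ξR ≠ 0 := by
        intro h0
        have hCeq : ξC = ξ := by
          funext x
          rw [hadd x, h0]
          simp
        rw [hCeq] at hdich
        exact absurd hdich (lt_irrefl _)
      have hdich2 : snF (convQ N a ξ) * snF ξR ≤ snF (convQ N a ξR) * snF ξ := by
        by_contra h2
        push_neg at h2
        have : snF (convQ N a ξ) * snF ξ < snF (convQ N a ξ) * snF ξ := by
          calc snF (convQ N a ξ) * snF ξ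
              = (snF (convQ N a ξC) + snF (convQ N a ξR)) * snF ξ := by rw [← hsplitQ]
            _ = snF (convQ N a ξC) * snF ξ + snF (convQ N a ξR) * snF ξ := by ring
            _ < snF (convQ N a ξ) * snF ξC + snF (convQ N a ξ) * snF ξR :=
                add_lt_add hdich h2
            _ = snF (convQ N a ξ) * (snF ξC + snF ξR) := by ring
            _ = snF (convQ N a ξ) * snF ξ := by rw [← hsplitE]
        exact absurd this (lt_irrefl _)
      have hER : 0 < snF ξR := by
        obtain ⟨x, hx⟩ := Function.ne_iff.mp hξR
        exact snF_pos x hx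
      have hsub : Function.support ξR ⊂ Function.support ξ := by
        constructor
        · intro x hx
          rw [Function.mem_support] at hx ⊢
          intro h0
          apply hx
          by_cases hc : x ∈ P j <;> simp [hξRdef, hc, h0]
        · intro hsub2
          have := hsub2 (Function.mem_support.mpr hx₀)
          rw [Function.mem_support] at this
          apply this
          simp [hξRdef, hx₀C]
      have hcard : (Function.support ξR).ncard ≤ k := by
        have h1 : (Function.support ξR).ncard < (Function.support ξ).ncard :=
          Set.ncard_lt_ncard hsub (Set.toFinite _)
        omega
      have hcardm : (Function.support ξR).ncard ≤ m := by
        have h1 : (Function.support ξR).ncard ≤ (Function.support ξ).ncard :=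
          Set.ncard_le_ncard hsub.subset (Set.toFinite _)
        omega
      obtain ⟨ψ, hψne, hψfin, hineq⟩ := ih ξR hcardm hcard
      refine ⟨ψ, hψne, hψfin, ?_⟩
      have key : (snF (convQ N a ξ) * snF ψ) * snF ξR ≤
          (snF (convG a ψ) * snF ξ) * snF ξR := by
        calc (snF (convQ N a ξ) * snF ψ) * snF ξR
            = (snF (convQ N a ξ) * snF ξR) * snF ψ := by ring
          _ ≤ (snF (convQ N a ξR) * snF ξ) * snF ψ :=
              mul_le_mul_of_nonneg_right hdich2 (snF_nonneg _)
          _ = (snF (convQ N a ξR) * snF ψ) * snF ξ := by ring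
          _ ≤ (snF (convG a ψ) * snF ξR) * snF ξ :=
              mul_le_mul_of_nonneg_right hineq (snF_nonneg _)
          _ = (snF (convG a ψ) * snF ξ) * snF ξR := by ring
      exact le_of_mul_le_mul_right key hER

end Outer



/-- If a is supported in the ball of radius r and
4(3rm + r) < α = min{l_S(y) : y ∈ N, y ≠ e}, then for every ξ on G/N supported
on at most m points there is a nonzero finitely supported ψ on G with
‖λ_{G/N}(a)ξ‖·‖ψ‖ ≤ ‖λ_G(a)ψ‖·‖ξ‖. -/
theorem stmt_12 {G : Type*} [Group G] (S : Set G)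
    (hsym : S⁻¹ = S) (hgen : Subgroup.closure S = ⊤)
    (N : Subgroup G) [N.Normal] [N.FiniteIndex] (hN : N ≠ ⊥)
    (α r m : ℕ) (hr : 1 ≤ r) (hm : 1 ≤ m)
    (hα : α = sInf {n : ℕ | ∃ y : G, y ∈ N ∧ y ≠ 1 ∧ wordLength S y = n})
    (a : G → ℂ) (ha : (Function.support a).Finite)
    (har : Function.support a ⊆ {g : G | wordLength S g ≤ r})
    (hcond : 4 * (3 * r * m + r) < α) :
    ∀ ξ : G ⧸ N → ℂ, (Function.support ξ).ncard ≤ m →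
      ∃ ψ : G → ℂ, ψ ≠ 0 ∧ (Function.support ψ).Finite ∧
        Real.sqrt (∑ᶠ x : G ⧸ N,
            ‖∑ᶠ g : G, a g * ξ ((QuotientGroup.mk' N g)⁻¹ * x)‖ ^ 2) *
          Real.sqrt (∑ᶠ h : G, ‖ψ h‖ ^ 2) ≤
        Real.sqrt (∑ᶠ h : G, ‖∑ᶠ g : G, a g * ψ (g⁻¹ * h)‖ ^ 2) *
          Real.sqrt (∑ᶠ x : G ⧸ N, ‖ξ x‖ ^ 2) := by
  intro ξ hsupp
  have htriv : ∀ g : G, g ∈ N → wordLength S g < α → g = 1 := by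
    intro g hgN hlt
    by_contra hne
    have : α ≤ wordLength S g := by
      rw [hα]
      exact Nat.sInf_le ⟨g, hgN, hne, rfl⟩
    omega
  obtain ⟨ψ, h1, h2, h3⟩ := mainInd hsym hgen N α r m hr hm htriv a ha har hcond
    (Function.support ξ).ncard ξ hsupp le_rfl
  refine ⟨ψ, h1, h2, ?_⟩
  have hgoal : Real.sqrt (snF (convQ N a ξ)) * Real.sqrt (snF ψ) ≤
      Real.sqrt (snF (convG a ψ)) * Real.sqrt (snF ξ) := by
    rw [← Real.sqrt_mul (snF_nonneg _), ← Real.sqrt_mul (snF_nonneg _)]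
    exact Real.sqrt_le_sqrt h3
  exact hgoal
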